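/- The Varshamov–Tenengolts code {c ∈ {0,1}^n : Σ_{i=1}^n i·c_i ≡ 0 (mod n+1)} corrects a single deletion: if c, c' are both in this set and share a common subsequence of length n-1, then c = c'. -/

import Mathlib

def vtSum (c : List Bool) : ℕ :=
  ∑ i ∈ Finset.range c.length, (i + 1) * (if c.getD i false then 1 else 0)

lemma count_true_eq (l : List Bool) :
    l.count true = ∑ i ∈ Finset.range l.length, (if l.getD i false then 1 else 0) := by
  induction l with
  | nil => simp
  | cons x t ih =>
    rw [List.count_cons]
    simp only [List.length_cons]
    rw [Finset.sum_range_succ' (fun i => if (x :: t).getD i false then 1 else 0)]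
    simp only [List.getD_cons_succ, List.getD_cons_zero]
    rw [← ih]
    cases x <;> simp <;> omega

lemma vtSum_cons (x : Bool) (l : List Bool) :
    vtSum (x :: l) = (if x then 1 else 0) + vtSum l + l.count true := by
  unfold vtSum
  simp only [List.length_cons]
  rw [Finset.sum_range_succ' (fun i => (i + 1) * (if (x :: l).getD i false then 1 else 0))]
  simp only [List.getD_cons_succ, List.getD_cons_zero]
  rw [count_true_eq]
  have hs : ∑ i ∈ Finset.range l.length, (i + 1 + 1) * (if l.getD i false then 1 else 0)
      = (∑ i ∈ Finset.range l.length, (i + 1) * (if l.getD i false then 1 else 0))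
        + ∑ i ∈ Finset.range l.length, (if l.getD i false then 1 else 0) := by
    rw [← Finset.sum_add_distrib]
    apply Finset.sum_congr rfl
    intro i _
    ring
  rw [hs]
  cases x <;> simp <;> ring

lemma vtSum_insert (a b : List Bool) (x : Bool) :
    vtSum (a ++ x :: b) = vtSum (a ++ b) + (a.length + 1) * (if x then 1 else 0)
      + b.count true := by
  induction a with
  | nil => simp [vtSum_cons]; cases x <;> simp <;> ring
  | cons h t ih =>
    simp only [List.cons_append, vtSum_cons, ih, List.count_append, List.count_cons,
      List.length_cons]
    cases x <;> simp <;> ring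

/-- sublist of length one less: deletion decomposition -/
lemma sublist_decomp : ∀ {e c : List Bool}, e.Sublist c → c.length = e.length + 1 →
    ∃ a x b, e = a ++ b ∧ c = a ++ x :: b := by
  intro e c h
  induction h with
  | slnil => intro h; simp at h
  | cons x h ih =>
    intro hl
    simp at hl
    have := h.eq_of_length hl.symm
    exact ⟨[], x, _, by simp [this], rfl⟩
  | cons_cons x h ih =>
    intro hl
    simp at hl
    obtain ⟨a, y, b, h1, h2⟩ := ih hl
    exact ⟨x :: a, y, b, by simp [h1], by simp [h2]⟩

lemma all_eq_cons_append (m : List Bool) (x : Bool) (h : ∀ b ∈ m, b = x) :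
    x :: m = m ++ [x] := by
  have : m = List.replicate m.length x := List.eq_replicate_iff.mpr ⟨rfl, h⟩
  rw [this, ← List.replicate_succ, List.replicate_succ']

lemma helper (a b a' b' : List Bool) (x y : Bool)
    (hab : a ++ b = a' ++ b') (hle : a.length ≤ a'.length)
    (heq : (a.length + 1) * (if x then 1 else 0) + b.count true
      = (a'.length + 1) * (if y then 1 else 0) + b'.count true) :
    a ++ x :: b = a' ++ y :: b' := by
  obtain ⟨m, hm1, hm2⟩ : ∃ m, a' = a ++ m ∧ b = m ++ b' := by
    rcases List.append_eq_append_iff.mp hab with ⟨m, h1, h2⟩ | ⟨m, h1, h2⟩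
    · exact ⟨m, h1, h2⟩
    · have : m = [] := by
        have := congrArg List.length h1
        simp at this
        have : m.length = 0 := by omega
        exact List.length_eq_zero_iff.mp this
      subst this
      exact ⟨[], by simpa using h1.symm, by simpa using h2.symm⟩
  subst hm1 hm2
  suffices hs : x :: m = m ++ [y] by
    simp only [List.append_assoc, List.append_cancel_left_eq]
    rw [← List.cons_append, hs]
    simp
  simp only [List.count_append, List.length_append] at heq
  have hcm : m.count true ≤ m.length := (List.count_le_length : m.count true ≤ m.length)
  cases x <;> cases y <;> simp at heq
  · -- false false : count m = 0
    have : m.count true = 0 := by omega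
    have hall : ∀ b ∈ m, b = false := by
      intro b hb
      by_contra hb'
      have : b = true := by simpa using hb'
      subst this
      exact absurd hb (List.count_eq_zero.mp ‹m.count true = 0›)
    exact all_eq_cons_append m false hall
  · omega
  · omega
  · have : m.count true = m.length := by omega
    have hall : ∀ b ∈ m, b = true := fun b hb => (List.count_eq_length.mp this b hb).symm
    exact all_eq_cons_append m true hall

theorem stmt17 (n : ℕ) (c c' : List Bool)
    (hc : c.length = n) (hc' : c'.length = n)
    (hvt : vtSum c % (n + 1) = 0) (hvt' : vtSum c' % (n + 1) = 0)
    (h : ∃ e : List Bool, e.length = n - 1 ∧ e.Sublist c ∧ e.Sublist c') :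
    c = c' := by
  obtain ⟨e, he, hec, hec'⟩ := h
  rcases Nat.eq_zero_or_pos n with hn | hn
  · subst hn
    rw [List.length_eq_zero_iff.mp hc, List.length_eq_zero_iff.mp hc']
  have hlen : c.length = e.length + 1 := by omega
  have hlen' : c'.length = e.length + 1 := by omega
  obtain ⟨a, x, b, h1, h2⟩ := sublist_decomp hec hlen
  obtain ⟨a', y, b', h1', h2'⟩ := sublist_decomp hec' hlen'
  set T := (a.length + 1) * (if x then 1 else 0) + b.count true with hT
  set T' := (a'.length + 1) * (if y then 1 else 0) + b'.count true with hT'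
  have hv : vtSum c = vtSum e + T := by rw [h2, h1, vtSum_insert]; ring
  have hv' : vtSum c' = vtSum e + T' := by rw [h2', h1', vtSum_insert]; ring
  have hTle : T ≤ n := by
    have h3 := congrArg List.length h2
    simp [hc] at h3
    have := (List.count_le_length : b.count true ≤ b.length)
    cases x <;> simp [hT] <;> omega
  have hT'le : T' ≤ n := by
    have h3 := congrArg List.length h2'
    simp [hc'] at h3
    have := (List.count_le_length : b'.count true ≤ b'.length)
    cases y <;> simp [hT'] <;> omega
  have hmod : T % (n + 1) = T' % (n + 1) := by
    have e1 : (vtSum e + T) % (n + 1) = 0 := by rw [← hv]; exact hvt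
    have e2 : (vtSum e + T') % (n + 1) = 0 := by rw [← hv']; exact hvt'
    have h3 : vtSum e + T ≡ vtSum e + T' [MOD n + 1] := by
      unfold Nat.ModEq
      rw [e1, e2]
    exact Nat.ModEq.add_left_cancel' (vtSum e) h3
  have hTT : T = T' := by
    rw [Nat.mod_eq_of_lt (by omega), Nat.mod_eq_of_lt (by omega)] at hmod
    exact hmod
  rw [h2, h2']
  have hab : a ++ b = a' ++ b' := by rw [← h1, ← h1']
  rcases le_total a.length a'.length with hle | hle
  · exact helper a b a' b' x y hab hle (by rw [← hT, ← hT', hTT])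
  · exact (helper a' b' a b y x hab.symm hle (by rw [← hT, ← hT', hTT])).symm
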